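/- Summation theorem for flux: under the setup of the previous theorem, if additionally J satisfies ∑_{j=1}^n e_j ∂J/∂e_j = J (Euler-type identity in e, with S fixed) at (e, S(e)), then the composed flux Ĵ(e) = J(e, S(e)) satisfies ∑_{j=1}^n e_j ∂Ĵ/∂e_j = Ĵ(e). -/

import Mathlib

private lemma clm_sum_single {k : ℕ} (L : (Fin k → ℝ) →L[ℝ] ℝ) (v : Fin k → ℝ) :
    ∑ j : Fin k, v j * L (Pi.single j 1) = L v := by
  have hv : ∑ j : Fin k, Pi.single j (v j) = v := Finset.univ_sum_single v
  calc ∑ j : Fin k, v j * L (Pi.single j 1)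
      = ∑ j : Fin k, L (Pi.single j (v j)) := by
        refine Finset.sum_congr rfl fun j _ => ?_
        have : (Pi.single j (v j) : Fin k → ℝ) = v j • (Pi.single j 1 : Fin k → ℝ) := by
          ext i
          by_cases h : i = j <;> simp [h, Pi.single_apply]
        rw [this, L.map_smul, smul_eq_mul]
    _ = L (∑ j : Fin k, Pi.single j (v j)) := (map_sum L _ _).symm
    _ = L v := by rw [hv]

/-- Summation theorem for flux: if additionally `∑ⱼ eⱼ ∂J/∂eⱼ = J` (with `S` fixed),
then the composed flux `Ĵ(e) = J(e, S(e))` satisfies `∑ⱼ eⱼ ∂Ĵ/∂eⱼ = Ĵ(e)`. -/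
theorem summation_theorem_flux {n m : ℕ}
    (F : (Fin n → ℝ) → (Fin m → ℝ) → (Fin m → ℝ))
    (J : (Fin n → ℝ) → (Fin m → ℝ) → ℝ)
    (hF : ContDiff ℝ 1 (fun p : (Fin n → ℝ) × (Fin m → ℝ) => F p.1 p.2))
    (hJ : ContDiff ℝ 1 (fun p : (Fin n → ℝ) × (Fin m → ℝ) => J p.1 p.2))
    (S : (Fin n → ℝ) → (Fin m → ℝ))
    (hS : Differentiable ℝ S)
    (hFS : ∀ e, F e (S e) = 0)
    (hinv : ∀ e, IsUnit (Matrix.of fun i j : Fin m =>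
      fderiv ℝ (fun s => F e s i) (S e) (Pi.single j 1)))
    (hhomF : ∀ e (i : Fin m),
      ∑ j : Fin n, e j * fderiv ℝ (fun e' => F e' (S e) i) e (Pi.single j 1) = 0)
    (hhomJ : ∀ e,
      ∑ j : Fin n, e j * fderiv ℝ (fun e' => J e' (S e)) e (Pi.single j 1)
        = J e (S e)) :
    ∀ e, ∑ j : Fin n, e j * fderiv ℝ (fun e' => J e' (S e')) e (Pi.single j 1)
      = J e (S e) := by
  intro e
  classical
  set p : (Fin n → ℝ) × (Fin m → ℝ) := (e, S e) with hp
  -- derivative of S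
  have hDS : HasFDerivAt S (fderiv ℝ S e) e := (hS e).hasFDerivAt
  set DS := fderiv ℝ S e with hDSdef
  set w : Fin m → ℝ := DS e with hw
  -- derivative of the pair map e' ↦ (e', S e')
  have hpair : HasFDerivAt (fun e' => (e', S e'))
      ((ContinuousLinearMap.id ℝ (Fin n → ℝ)).prod DS) e :=
    HasFDerivAt.prodMk (hasFDerivAt_id e) hDS
  -- pair map with S fixed: e' ↦ (e', S e)
  have hpairc : HasFDerivAt (fun e' => (e', S e))
      ((ContinuousLinearMap.id ℝ (Fin n → ℝ)).prod 0) e :=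
    HasFDerivAt.prodMk (hasFDerivAt_id e) (hasFDerivAt_const (S e) e)
  -- pair map with e fixed: s ↦ (e, s)
  have hpaire : HasFDerivAt (fun s : Fin m → ℝ => (e, s))
      ((0 : (Fin m → ℝ) →L[ℝ] (Fin n → ℝ)).prod (ContinuousLinearMap.id ℝ (Fin m → ℝ)))
      (S e) :=
    HasFDerivAt.prodMk (hasFDerivAt_const e (S e)) (hasFDerivAt_id (S e))
  -- derivative of J
  have hJd : HasFDerivAt (fun q : (Fin n → ℝ) × (Fin m → ℝ) => J q.1 q.2)
      (fderiv ℝ (fun q : (Fin n → ℝ) × (Fin m → ℝ) => J q.1 q.2) p) p :=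
    ((hJ.differentiable one_ne_zero) p).hasFDerivAt
  set DJ := fderiv ℝ (fun q : (Fin n → ℝ) × (Fin m → ℝ) => J q.1 q.2) p with hDJ
  -- derivative of F (vector valued) and coordinates
  have hFd : HasFDerivAt (fun q : (Fin n → ℝ) × (Fin m → ℝ) => F q.1 q.2)
      (fderiv ℝ (fun q : (Fin n → ℝ) × (Fin m → ℝ) => F q.1 q.2) p) p :=
    ((hF.differentiable one_ne_zero) p).hasFDerivAt
  set DF := fderiv ℝ (fun q : (Fin n → ℝ) × (Fin m → ℝ) => F q.1 q.2) p with hDF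
  -- coordinate derivatives
  have hFdi : ∀ i : Fin m, HasFDerivAt (fun q : (Fin n → ℝ) × (Fin m → ℝ) => F q.1 q.2 i)
      ((ContinuousLinearMap.proj i).comp DF) p := fun i =>
    (ContinuousLinearMap.proj i :
      (Fin m → ℝ) →L[ℝ] ℝ).hasFDerivAt.comp p hFd
  set DFi : Fin m → ((Fin n → ℝ) × (Fin m → ℝ) →L[ℝ] ℝ) :=
    fun i => (ContinuousLinearMap.proj i).comp DF with hDFi
  -- Step: DFi i (e, 0) = 0 from hhomF
  have hFe0 : ∀ i, DFi i (e, 0) = 0 := by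
    intro i
    have hcomp : HasFDerivAt (fun e' => F e' (S e) i)
        ((DFi i).comp ((ContinuousLinearMap.id ℝ (Fin n → ℝ)).prod 0)) e :=
      ((hFdi i).comp e hpairc :)
    have hfd := hcomp.fderiv
    have := hhomF e i
    rw [hfd] at this
    have hsum := clm_sum_single ((DFi i).comp
      ((ContinuousLinearMap.id ℝ (Fin n → ℝ)).prod 0)) e
    rw [hsum] at this
    simpa using this
  -- Step: the composed map e' ↦ F e' (S e') i is constant zero, so DFi i (e, w) = 0
  have hFw : ∀ i, DFi i (e, w) = 0 := by
    intro i
    have hcomp : HasFDerivAt (fun e' => F e' (S e') i)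
        ((DFi i).comp ((ContinuousLinearMap.id ℝ (Fin n → ℝ)).prod DS)) e :=
      ((hFdi i).comp e hpair :)
    have hconst : (fun e' => F e' (S e') i) = fun _ => (0 : ℝ) := by
      funext e'
      rw [hFS e']
      rfl
    have hzero : HasFDerivAt (fun e' => F e' (S e') i) (0 : (Fin n → ℝ) →L[ℝ] ℝ) e := by
      rw [hconst]; exact hasFDerivAt_const 0 e
    have heq := hcomp.unique hzero
    have := congrFun (congrArg DFunLike.coe heq) e
    simpa using this
  -- Hence DFi i (0, w) = 0 for all i
  have hF0w : ∀ i, DFi i ((0 : Fin n → ℝ), w) = 0 := by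
    intro i
    have hadd : ((e, w) : (Fin n → ℝ) × (Fin m → ℝ)) = (e, 0) + (0, w) := by
      simp [Prod.ext_iff]
    have := hFw i
    rw [hadd, map_add, hFe0 i, zero_add] at this
    exact this
  -- The matrix entries
  set M : Matrix (Fin m) (Fin m) ℝ := Matrix.of fun i j : Fin m =>
      fderiv ℝ (fun s => F e s i) (S e) (Pi.single j 1) with hM
  have hMentry : ∀ i j, M i j = DFi i ((0 : Fin n → ℝ), Pi.single j 1) := by
    intro i j
    have hcomp : HasFDerivAt (fun s => F e s i)
        ((DFi i).comp
          ((0 : (Fin m → ℝ) →L[ℝ] (Fin n → ℝ)).prod (ContinuousLinearMap.id ℝ (Fin m → ℝ))))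
        (S e) :=
      (hFdi i).comp (S e) hpaire
    have hfd := hcomp.fderiv
    simp only [hM, Matrix.of_apply]
    rw [hfd]
    rfl
  -- M *ᵥ w = 0
  have hMw : M.mulVec w = 0 := by
    funext i
    have hLw : ∀ v : Fin m → ℝ, ∑ j : Fin m, v j * DFi i ((0 : Fin n → ℝ), Pi.single j 1)
        = DFi i ((0 : Fin n → ℝ), v) := by
      intro v
      have := clm_sum_single ((DFi i).comp
        ((0 : (Fin m → ℝ) →L[ℝ] (Fin n → ℝ)).prod (ContinuousLinearMap.id ℝ (Fin m → ℝ)))) v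
      simpa using this
    have : M.mulVec w i = ∑ j : Fin m, w j * DFi i ((0 : Fin n → ℝ), Pi.single j 1) := by
      simp only [Matrix.mulVec, dotProduct]
      refine Finset.sum_congr rfl fun j _ => ?_
      rw [hMentry i j, mul_comm]
    rw [this, hLw w, hF0w i]
    rfl
  -- invertibility gives w = 0
  have hw0 : w = 0 := by
    have hU := hinv e
    have : Invertible M := hU.invertible
    calc w = (1 : Matrix (Fin m) (Fin m) ℝ).mulVec w := (Matrix.one_mulVec w).symm
      _ = (⅟M * M).mulVec w := by rw [invOf_mul_self]
      _ = (⅟M).mulVec (M.mulVec w) := by rw [Matrix.mulVec_mulVec]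
      _ = (⅟M).mulVec 0 := by rw [hMw]
      _ = 0 := Matrix.mulVec_zero _
  -- Now the final computation
  have hcompJ : HasFDerivAt (fun e' => J e' (S e'))
      (DJ.comp ((ContinuousLinearMap.id ℝ (Fin n → ℝ)).prod DS)) e :=
    (hJd.comp e hpair :)
  have hcompJc : HasFDerivAt (fun e' => J e' (S e))
      (DJ.comp ((ContinuousLinearMap.id ℝ (Fin n → ℝ)).prod 0)) e :=
    (hJd.comp e hpairc :)
  have key : ∑ j : Fin n, e j * fderiv ℝ (fun e' => J e' (S e')) e (Pi.single j 1)
      = DJ (e, w) := by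
    rw [hcompJ.fderiv]
    have := clm_sum_single (DJ.comp ((ContinuousLinearMap.id ℝ (Fin n → ℝ)).prod DS)) e
    simpa using this
  have key2 : DJ (e, (0 : Fin m → ℝ)) = J e (S e) := by
    have := hhomJ e
    rw [hcompJc.fderiv] at this
    have hsum := clm_sum_single (DJ.comp
      ((ContinuousLinearMap.id ℝ (Fin n → ℝ)).prod 0)) e
    rw [hsum] at this
    simpa using this
  rw [key, hw0]
  exact key2
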